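/- Let G be a finite simple connected graph of order at least 2 with girth at least 5, let S be an MLD-set of G, and let x ∈ S and y ∈ V(G) \ S be such that the pair {x,y} is not doubly resolved by S. Then N(y) = {x}, i.e., y is a vertex of degree 1 whose only neighbor is x. -/
import Mathlib


open SimpleGraph

variable {V : Type*}

/-- `S` is a resolving set of `G`. -/
def isResolvingSet (G : SimpleGraph V) (S : Set V) : Prop :=
  ∀ x y : V, x ≠ y → ∃ u ∈ S, G.dist u x ≠ G.dist u y

/-- `S` is a dominating set of `G`. -/
def isDominatingSet (G : SimpleGraph V) (S : Set V) : Prop :=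
  ∀ x : V, x ∉ S → ∃ u ∈ S, G.Adj u x

/-- `S` is a metric-locating-dominating set of `G`. -/
def isMLDSet (G : SimpleGraph V) (S : Set V) : Prop :=
  isResolvingSet G S ∧ isDominatingSet G S

/-- `S` is a locating-dominating set of `G`. -/
def isLDSet (G : SimpleGraph V) (S : Set V) : Prop :=
  isDominatingSet G S ∧
    ∀ x ∉ S, ∀ y ∉ S, x ≠ y → G.neighborSet x ∩ S ≠ G.neighborSet y ∩ S

/-- vertices `u` and `v` doubly resolve the pair `{x, y}`. -/
def doublyResolves (G : SimpleGraph V) (u v x y : V) : Prop :=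
  (G.dist u x : ℤ) - (G.dist u y : ℤ) ≠ (G.dist v x : ℤ) - (G.dist v y : ℤ)

/-- the set `S` doubly resolves the pair `{x, y}`. -/
def setDoublyResolves (G : SimpleGraph V) (S : Set V) (x y : V) : Prop :=
  ∃ u ∈ S, ∃ v ∈ S, doublyResolves G u v x y

/-- `S` is a doubly resolving set of `G`. -/
def isDoublyResolvingSet (G : SimpleGraph V) (S : Set V) : Prop :=
  ∀ x y : V, x ≠ y → setDoublyResolves G S x y

/-- the metric dimension `dim G`. -/
noncomputable def metricDim (G : SimpleGraph V) : ℕ :=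
  sInf {n | ∃ S : Set V, isResolvingSet G S ∧ S.ncard = n}

/-- the domination number `γ(G)`. -/
noncomputable def domNum (G : SimpleGraph V) : ℕ :=
  sInf {n | ∃ S : Set V, isDominatingSet G S ∧ S.ncard = n}

/-- the metric-location-domination number `γ_M(G)`. -/
noncomputable def mldNum (G : SimpleGraph V) : ℕ :=
  sInf {n | ∃ S : Set V, isMLDSet G S ∧ S.ncard = n}

/-- the location-domination number `γ_L(G)`. -/
noncomputable def ldNum (G : SimpleGraph V) : ℕ :=
  sInf {n | ∃ S : Set V, isLDSet G S ∧ S.ncard = n}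

/-- the minimum cardinality `ψ(G)` of a doubly resolving set. -/
noncomputable def psiNum (G : SimpleGraph V) : ℕ :=
  sInf {n | ∃ S : Set V, isDoublyResolvingSet G S ∧ S.ncard = n}

/-- a leaf: a vertex of degree 1. -/
def isLeaf (G : SimpleGraph V) (x : V) : Prop := (G.neighborSet x).ncard = 1

/-- a support vertex: a vertex adjacent to some leaf. -/
def isSupport (G : SimpleGraph V) (u : V) : Prop := ∃ x, isLeaf G x ∧ G.Adj u x

/-- a strong support vertex: a vertex adjacent to at least two leaves. -/
def isStrongSupport (G : SimpleGraph V) (u : V) : Prop :=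
  2 ≤ {x | isLeaf G x ∧ G.Adj u x}.ncard

/-- `ℓ(G)`: the number of leaves. -/
noncomputable def numLeaves (G : SimpleGraph V) : ℕ := {x | isLeaf G x}.ncard

/-- `ℓ'(G)`: the number of leaves adjacent to a strong support vertex. -/
noncomputable def numStrongLeaves (G : SimpleGraph V) : ℕ :=
  {x | isLeaf G x ∧ ∃ u, isStrongSupport G u ∧ G.Adj u x}.ncard

/-- a major vertex: a vertex of degree at least 3. -/
def isMajor (G : SimpleGraph V) (u : V) : Prop := 3 ≤ (G.neighborSet u).ncard

/-- `x` is a terminal vertex of the major vertex `u`: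
`x` is a leaf and `u` is the major vertex closest to `x`. -/
def isTerminalOf (G : SimpleGraph V) (u x : V) : Prop :=
  isLeaf G x ∧ isMajor G u ∧ ∀ w, isMajor G w → w ≠ u → G.dist u x < G.dist w x

/-- the terminal degree `ter(u)` of `u`. -/
noncomputable def terDeg (G : SimpleGraph V) (u : V) : ℕ :=
  {x | isTerminalOf G u x}.ncard

/-- `G` is (isomorphic to) a path graph. -/
def isPathGraph (G : SimpleGraph V) : Prop :=
  ∃ n : ℕ, Nonempty (G ≃g SimpleGraph.pathGraph n)

private lemma girth_le_of_cycle {G : SimpleGraph V} {a : V} {w : G.Walk a a}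
    (hw : w.IsCycle) : G.girth ≤ w.length := by
  have h : G.egirth ≤ (w.length : ℕ∞) :=
    iInf_le_of_le a (iInf_le_of_le w (iInf_le_of_le hw le_rfl))
  simpa [SimpleGraph.girth] using ENat.toNat_le_toNat h (by simp)

private lemma no_triangle {G : SimpleGraph V} (hg : 5 ≤ G.girth)
    {a b c : V} (hab : G.Adj a b) (hbc : G.Adj b c) (hca : G.Adj c a) : False := by
  let w : G.Walk a a := .cons hab (.cons hbc (.cons hca .nil))
  have hcyc : w.IsCycle := by
    rw [SimpleGraph.Walk.cons_isCycle_iff]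
    constructor
    · rw [SimpleGraph.Walk.isPath_def]
      simp [hbc.ne, hca.ne, hab.ne']
    · simp [hab.ne, hab.ne', hbc.ne, hca.ne, hca.ne', Sym2.eq_iff]
  have := girth_le_of_cycle hcyc
  simp only [w, SimpleGraph.Walk.length_cons, SimpleGraph.Walk.length_nil] at this
  omega

private lemma no_four_cycle {G : SimpleGraph V} (hg : 5 ≤ G.girth)
    {a b c d : V} (hab : G.Adj a b) (hbc : G.Adj b c) (hcd : G.Adj c d)
    (hda : G.Adj d a) (hac : a ≠ c) (hbd : b ≠ d) : False := by
  let w : G.Walk a a := .cons hab (.cons hbc (.cons hcd (.cons hda .nil)))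
  have hcyc : w.IsCycle := by
    rw [SimpleGraph.Walk.cons_isCycle_iff]
    constructor
    · rw [SimpleGraph.Walk.isPath_def]
      simp [hbc.ne, hcd.ne, hda.ne, hbd, hac.symm, hab.ne']
    · simp [hab.ne, hab.ne', hbc.ne, hcd.ne, hda.ne, hda.ne', hbd, hac, hac.symm, Sym2.eq_iff]
  have := girth_le_of_cycle hcyc
  simp only [w, SimpleGraph.Walk.length_cons, SimpleGraph.Walk.length_nil] at this
  omega

theorem stmt17 {V : Type*} [Fintype V] (G : SimpleGraph V)
    (hconn : G.Connected) (hcard : 2 ≤ Fintype.card V) (hg : 5 ≤ G.girth)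
    (S : Set V) (hS : isMLDSet G S) (x : V) (hx : x ∈ S)
    (y : V) (hy : y ∉ S) (hnd : ¬ setDoublyResolves G S x y) :
    G.neighborSet y = {x} := by
  obtain ⟨hres, hdom⟩ := hS
  have hxy : x ≠ y := fun h => hy (h ▸ hx)
  unfold setDoublyResolves doublyResolves at hnd
  push_neg at hnd
  have hposxy : 1 ≤ G.dist x y := hconn.pos_dist_of_ne hxy
  have key : ∀ u ∈ S, (G.dist u x : ℤ) - G.dist u y = -(G.dist x y : ℤ) := by
    intro u hu
    have h := hnd u hu x hx
    rwa [SimpleGraph.dist_self, Nat.cast_zero, zero_sub] at h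
  have claim : ∀ w ∈ S, G.Adj w y → w = x := by
    intro w hw hadj
    have h1 : G.dist w y = 1 := SimpleGraph.dist_eq_one_iff_adj.mpr hadj
    have hk := key w hw
    rw [h1] at hk
    have hw0 : G.dist w x = 0 := by omega
    exact hconn.dist_eq_zero_iff.mp hw0
  have hadjxy : G.Adj x y := by
    obtain ⟨u, hu, huy⟩ := hdom y hy
    exact (claim u hu huy) ▸ huy
  ext z
  simp only [SimpleGraph.mem_neighborSet, Set.mem_singleton_iff]
  constructor
  · intro hyz
    by_contra hzx
    have hzS : z ∉ S := fun hzS => hzx (claim z hzS hyz.symm)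
    obtain ⟨w, hw, hwz⟩ := hdom z hzS
    by_cases hwx : w = x
    · subst hwx
      exact absurd (no_triangle hg hadjxy hyz hwz.symm) id
    · have hwy : w ≠ y := fun h => hy (h ▸ hw)
      have hdzy : G.dist z y = 1 := SimpleGraph.dist_eq_one_iff_adj.mpr hyz.symm
      have hdwz : G.dist w z = 1 := SimpleGraph.dist_eq_one_iff_adj.mpr hwz
      have htri : G.dist w y ≤ G.dist w z + G.dist z y := hconn.dist_triangle
      have hposwy : 1 ≤ G.dist w y := hconn.pos_dist_of_ne hwy
      have hwy2 : G.dist w y = 2 := by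
        rcases Nat.lt_or_ge (G.dist w y) 2 with h | h
        · exfalso
          have : G.dist w y = 1 := by omega
          exact hwx (claim w hw (SimpleGraph.dist_eq_one_iff_adj.mp this))
        · omega
      have hk := key w hw
      rw [hwy2] at hk
      have hdxy1 : G.dist x y = 1 := SimpleGraph.dist_eq_one_iff_adj.mpr hadjxy
      rw [hdxy1] at hk
      have hwx1 : G.dist w x = 1 := by omega
      have hadjwx : G.Adj w x := SimpleGraph.dist_eq_one_iff_adj.mp hwx1
      exact no_four_cycle hg hadjxy hyz hwz.symm hadjwx (fun h => hzx h.symm)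
        (fun h => hy (h ▸ hw))
  · intro h
    exact h ▸ hadjxy.symm
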